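/- For all t ≥ 0, the inequality (1+t)^{1+t} ≥ exp(t + t²/(2(1+t))) holds. -/

import Mathlib

open Real Set

lemma aux_log_ge (t : ℝ) (ht : 0 ≤ t) : 2 * t / (2 + t) ≤ Real.log (1 + t) := by
  have hderiv : ∀ x ∈ interior (Ici (0:ℝ)),
      HasDerivAt (fun x : ℝ => Real.log (1 + x) - 2 * x / (2 + x))
        (1 / (1 + x) - 4 / (2 + x) ^ 2) x := by
    intro x hx
    simp only [interior_Ici, mem_Ioi] at hx
    have h1 : (0:ℝ) < 1 + x := by linarith
    have h2 : (0:ℝ) < 2 + x := by linarith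
    have hd1 : HasDerivAt (fun x : ℝ => Real.log (1 + x)) (1 / (1 + x)) x := by
      have := (Real.hasDerivAt_log h1.ne').comp x ((hasDerivAt_id x).const_add 1)
      simpa [Function.comp_def] using this
    have hd2 : HasDerivAt (fun x : ℝ => 2 * x / (2 + x)) (4 / (2 + x) ^ 2) x := by
      have := ((hasDerivAt_id x).const_mul 2).div ((hasDerivAt_id x).const_add 2) h2.ne'
      exact this.congr_deriv (by simp only [id]; ring)
    exact hd1.sub hd2
  have key : MonotoneOn (fun x : ℝ => Real.log (1 + x) - 2 * x / (2 + x)) (Ici 0) := by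
    apply monotoneOn_of_deriv_nonneg (convex_Ici 0)
    · apply ContinuousOn.sub
      · apply ContinuousOn.log (by fun_prop)
        intro x hx
        simp only [mem_Ici] at hx
        positivity
      · exact ContinuousOn.div (by fun_prop) (by fun_prop)
          (fun x hx => by simp only [mem_Ici] at hx; positivity)
    · intro x hx
      exact (hderiv x hx).differentiableAt.differentiableWithinAt
    · intro x hx
      rw [(hderiv x hx).deriv]
      simp only [interior_Ici, mem_Ioi] at hx
      have h1 : (0:ℝ) < 1 + x := by linarith
      have h2 : (0:ℝ) < 2 + x := by linarith
      rw [div_sub_div _ _ h1.ne' (by positivity), div_nonneg_iff]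
      left
      exact ⟨by nlinarith, by positivity⟩
  have h := key (self_mem_Ici) (mem_Ici.mpr ht) ht
  simp only [add_zero, mul_zero, zero_div, Real.log_one, sub_zero, zero_sub] at h
  linarith [h]

theorem stmt_1 (t : ℝ) (ht : 0 ≤ t) :
    (1 + t) ^ (1 + t) ≥ Real.exp (t + t ^ 2 / (2 * (1 + t))) := by
  have h1 : (0:ℝ) < 1 + t := by linarith
  have h2 : (0:ℝ) < 2 + t := by linarith
  rw [ge_iff_le, Real.rpow_def_of_pos h1, Real.exp_le_exp]
  have hlog := aux_log_ge t ht
  calc t + t ^ 2 / (2 * (1 + t))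
      ≤ (1 + t) * (2 * t / (2 + t)) := by
        have e1 : t + t ^ 2 / (2 * (1 + t)) = (2 * t * (1 + t) + t ^ 2) / (2 * (1 + t)) := by
          field_simp
        have e2 : (1 + t) * (2 * t / (2 + t)) = (2 * t * (1 + t)) / (2 + t) := by ring
        rw [e1, e2, div_le_div_iff₀ (by positivity) h2]
        nlinarith [pow_nonneg ht 3]
    _ ≤ (1 + t) * Real.log (1 + t) := by gcongr
    _ = Real.log (1 + t) * (1 + t) := by ring
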